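/- The bilinear map γ on the torus function algebra 𝒜_T defined by γ(A_n,A_m) = -n δ_{m,-n} for n,m even, γ(A_n,A_m) = 0 for different parity, and γ(A_n,A_m) = -n δ_{m,-n} + 3e₁(-n+1)δ_{m,-n+2} + (e₁-e₂)(2e₁+e₂)(-n+2)δ_{m,-n+4} for n,m odd, is antisymmetric and satisfies the cyclic cocycle identity γ(A_n A_m, A_k) + γ(A_m A_k, A_n) + γ(A_k A_n, A_m) = 0 with respect to the torus product. -/

import Mathlib

set_option maxHeartbeats 1000000

/-- The torus Krichever–Novikov function algebra product on `ℤ →₀ ℂ` (cf. Statement 13). -/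
noncomputable def torusMul (e₁ e₂ : ℂ) (f g : ℤ →₀ ℂ) : ℤ →₀ ℂ :=
  Finsupp.sum f fun n c => Finsupp.sum g fun m d =>
    if Even n ∨ Even m then Finsupp.single (n + m) (c * d)
    else Finsupp.single (n + m) (c * d)
      + (3 * e₁) • Finsupp.single (n + m - 2) (c * d)
      + ((e₁ - e₂) * (2 * e₁ + e₂)) • Finsupp.single (n + m - 4) (c * d)

/-- The geometric cocycle values `γ(Aₙ,Aₘ) = (1/2πi)∮_{C_S} Aₙ dAₘ` on the torus. -/
noncomputable def torusGamma0 (e₁ e₂ : ℂ) (n m : ℤ) : ℂ :=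
  if Even n ∧ Even m then -(n : ℂ) * (if m = -n then 1 else 0)
  else if Odd n ∧ Odd m then
    -(n : ℂ) * (if m = -n then 1 else 0)
      + 3 * e₁ * (-(n : ℂ) + 1) * (if m = -n + 2 then 1 else 0)
      + (e₁ - e₂) * (2 * e₁ + e₂) * (-(n : ℂ) + 2) * (if m = -n + 4 then 1 else 0)
  else 0

/-- The bilinear extension of `γ` to `𝒜_T`. -/
noncomputable def torusGamma (e₁ e₂ : ℂ) (f g : ℤ →₀ ℂ) : ℂ :=
  Finsupp.sum f fun n c => Finsupp.sum g fun m d => c * d * torusGamma0 e₁ e₂ n m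

lemma torusGamma0_antisymm (e₁ e₂ : ℂ) (n m : ℤ) :
    torusGamma0 e₁ e₂ n m + torusGamma0 e₁ e₂ m n = 0 := by
  unfold torusGamma0
  simp only [Int.even_iff, Int.odd_iff]
  split_ifs <;> first | (exfalso; omega) | (subst_vars; push_cast; ring1)

/-- The structure-constant version of `γ(AₙAₘ, Aₖ)`. -/
noncomputable def torusT (e₁ e₂ : ℂ) (n m k : ℤ) : ℂ :=
  if Even n ∨ Even m then torusGamma0 e₁ e₂ (n + m) k
  else torusGamma0 e₁ e₂ (n + m) k + (3 * e₁) * torusGamma0 e₁ e₂ (n + m - 2) k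
    + ((e₁ - e₂) * (2 * e₁ + e₂)) * torusGamma0 e₁ e₂ (n + m - 4) k

lemma torusT_cyc (e₁ e₂ : ℂ) (n m k : ℤ) :
    torusT e₁ e₂ n m k + torusT e₁ e₂ m k n + torusT e₁ e₂ k n m = 0 := by
  unfold torusT torusGamma0
  have d1 : (k = -(n + m)) ↔ (n + m + k = 0) := by omega
  have d2 : (n = -(m + k)) ↔ (n + m + k = 0) := by omega
  have d3 : (m = -(k + n)) ↔ (n + m + k = 0) := by omega
  have d4 : (k = -(n + m - 2)) ↔ (n + m + k = 2) := by omega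
  have d5 : (n = -(m + k - 2)) ↔ (n + m + k = 2) := by omega
  have d6 : (m = -(k + n - 2)) ↔ (n + m + k = 2) := by omega
  have d7 : (k = -(n + m - 4)) ↔ (n + m + k = 4) := by omega
  have d8 : (n = -(m + k - 4)) ↔ (n + m + k = 4) := by omega
  have d9 : (m = -(k + n - 4)) ↔ (n + m + k = 4) := by omega
  have c1 : ∀ t : ℤ, (k = -(n + m) + t) ↔ (n + m + k = t) := by omega
  have c2 : ∀ t : ℤ, (n = -(m + k) + t) ↔ (n + m + k = t) := by omega
  have c3 : ∀ t : ℤ, (m = -(k + n) + t) ↔ (n + m + k = t) := by omega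
  have c4 : ∀ t : ℤ, (k = -(n + m - 2) + t) ↔ (n + m + k = t + 2) := by omega
  have c5 : ∀ t : ℤ, (n = -(m + k - 2) + t) ↔ (n + m + k = t + 2) := by omega
  have c6 : ∀ t : ℤ, (m = -(k + n - 2) + t) ↔ (n + m + k = t + 2) := by omega
  have c7 : ∀ t : ℤ, (k = -(n + m - 4) + t) ↔ (n + m + k = t + 4) := by omega
  have c8 : ∀ t : ℤ, (n = -(m + k - 4) + t) ↔ (n + m + k = t + 4) := by omega
  have c9 : ∀ t : ℤ, (m = -(k + n - 4) + t) ↔ (n + m + k = t + 4) := by omega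
  have p1 : ∀ t : ℤ, ((n + m - t) % 2 = 0) ↔ ((n % 2 + m % 2 + t) % 2 = 0) := by omega
  have p2 : ∀ t : ℤ, ((m + k - t) % 2 = 0) ↔ ((m % 2 + k % 2 + t) % 2 = 0) := by omega
  have p3 : ∀ t : ℤ, ((k + n - t) % 2 = 0) ↔ ((k % 2 + n % 2 + t) % 2 = 0) := by omega
  have p4 : ((n + m) % 2 = 0) ↔ ((n % 2 + m % 2) % 2 = 0) := by omega
  have p5 : ((m + k) % 2 = 0) ↔ ((m % 2 + k % 2) % 2 = 0) := by omega
  have p6 : ((k + n) % 2 = 0) ↔ ((k % 2 + n % 2) % 2 = 0) := by omega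
  have q1 : ∀ t : ℤ, ((n + m - t) % 2 = 1) ↔ ((n % 2 + m % 2 + t) % 2 = 1) := by omega
  have q2 : ∀ t : ℤ, ((m + k - t) % 2 = 1) ↔ ((m % 2 + k % 2 + t) % 2 = 1) := by omega
  have q3 : ∀ t : ℤ, ((k + n - t) % 2 = 1) ↔ ((k % 2 + n % 2 + t) % 2 = 1) := by omega
  have q4 : ((n + m) % 2 = 1) ↔ ((n % 2 + m % 2) % 2 = 1) := by omega
  have q5 : ((m + k) % 2 = 1) ↔ ((m % 2 + k % 2) % 2 = 1) := by omega
  have q6 : ((k + n) % 2 = 1) ↔ ((k % 2 + n % 2) % 2 = 1) := by omega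
  simp only [Int.even_iff, Int.odd_iff, d1, d2, d3, d4, d5, d6, d7, d8, d9,
    c1, c2, c3, c4, c5, c6, c7, c8, c9, p1, p2, p3, p4, p5, p6, q1, q2, q3, q4, q5, q6]
  rcases Int.emod_two_eq n with hn | hn <;> rcases Int.emod_two_eq m with hm | hm <;>
    rcases Int.emod_two_eq k with hk | hk <;>
    simp only [hn, hm, hk] <;> norm_num <;>
    split_ifs <;>
    first
      | (exfalso; omega)
      | (push_cast; ring1)
      | (have h' : k = -n - m := by omega
         subst h'; push_cast; ring1)
      | (have h' : k = -n - m + 2 := by omega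
         subst h'; push_cast; ring1)
      | (have h' : k = -n - m + 4 := by omega
         subst h'; push_cast; ring1)

/-- `γ(·, h)` as an additive monoid hom. -/
noncomputable def torusGammaHom (e₁ e₂ : ℂ) (h : ℤ →₀ ℂ) : (ℤ →₀ ℂ) →+ ℂ where
  toFun f := torusGamma e₁ e₂ f h
  map_zero' := by simp [torusGamma]
  map_add' f₁ f₂ := by
    refine Finsupp.sum_add_index' (fun a => ?_) (fun a b₁ b₂ => ?_)
    · simp
    · rw [← Finsupp.sum_add]
      exact Finsupp.sum_congr fun x _ => by ring

lemma torusGammaHom_apply (e₁ e₂ : ℂ) (h f : ℤ →₀ ℂ) :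
    torusGammaHom e₁ e₂ h f = torusGamma e₁ e₂ f h := rfl

lemma torusGamma_single (e₁ e₂ : ℂ) (x : ℤ) (v : ℂ) (h : ℤ →₀ ℂ) :
    torusGamma e₁ e₂ (Finsupp.single x v) h
      = Finsupp.sum h fun k e => v * e * torusGamma0 e₁ e₂ x k := by
  unfold torusGamma
  exact Finsupp.sum_single_index (by simp)

lemma torusGamma_mul_expand (e₁ e₂ : ℂ) (f g h : ℤ →₀ ℂ) :
    torusGamma e₁ e₂ (torusMul e₁ e₂ f g) h =
      Finsupp.sum f fun n c => Finsupp.sum g fun m d => Finsupp.sum h fun k e =>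
        c * d * e * torusT e₁ e₂ n m k := by
  rw [← torusGammaHom_apply]
  unfold torusMul
  rw [map_finsuppSum]
  refine Finsupp.sum_congr fun n _ => ?_
  rw [map_finsuppSum]
  refine Finsupp.sum_congr fun m _ => ?_
  by_cases hp : Even n ∨ Even m
  · rw [if_pos hp, torusGammaHom_apply, torusGamma_single]
    refine Finsupp.sum_congr fun k _ => ?_
    unfold torusT
    rw [if_pos hp]
  · rw [if_neg hp, map_add, map_add, Finsupp.smul_single', Finsupp.smul_single',
      torusGammaHom_apply, torusGammaHom_apply, torusGammaHom_apply,
      torusGamma_single, torusGamma_single, torusGamma_single,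
      ← Finsupp.sum_add, ← Finsupp.sum_add]
    refine Finsupp.sum_congr fun k _ => ?_
    unfold torusT
    rw [if_neg hp]; ring

/-- Auxiliary rotation of a triple `Finsupp.sum`. -/
lemma finsupp_sum_rot (a b c : ℤ →₀ ℂ) (F : ℤ → ℂ → ℤ → ℂ → ℤ → ℂ → ℂ) :
    (Finsupp.sum b fun m d => Finsupp.sum c fun k e => Finsupp.sum a fun n v => F n v m d k e)
      = Finsupp.sum a fun n v => Finsupp.sum b fun m d => Finsupp.sum c fun k e =>
          F n v m d k e := by
  calc (Finsupp.sum b fun m d => Finsupp.sum c fun k e => Finsupp.sum a fun n v => F n v m d k e)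
      = Finsupp.sum b fun m d => Finsupp.sum a fun n v => Finsupp.sum c fun k e =>
          F n v m d k e := Finsupp.sum_congr fun m _ => Finsupp.sum_comm c a _
    _ = _ := Finsupp.sum_comm b a _

/-- the torus cocycle `γ` is antisymmetric and satisfies the cyclic cocycle
identity `γ(AₙAₘ, Aₖ) + γ(AₘAₖ, Aₙ) + γ(AₖAₙ, Aₘ) = 0` w.r.t. the torus product. -/
theorem torusGamma_cocycle (e₁ e₂ : ℂ) :
    (∀ f g : ℤ →₀ ℂ, torusGamma e₁ e₂ f g = - torusGamma e₁ e₂ g f) ∧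
    (∀ f g h : ℤ →₀ ℂ,
      torusGamma e₁ e₂ (torusMul e₁ e₂ f g) h
        + torusGamma e₁ e₂ (torusMul e₁ e₂ g h) f
        + torusGamma e₁ e₂ (torusMul e₁ e₂ h f) g = 0) := by
  constructor
  · intro f g
    refine eq_neg_of_add_eq_zero_left ?_
    unfold torusGamma
    rw [Finsupp.sum_comm g f, ← Finsupp.sum_add]
    refine Eq.trans (Finsupp.sum_congr fun n _ => ?_) (Finsupp.sum_fun_zero _)
    rw [← Finsupp.sum_add]
    refine Eq.trans (Finsupp.sum_congr fun m _ => ?_) (Finsupp.sum_fun_zero _)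
    have := torusGamma0_antisymm e₁ e₂ n m
    set c := f n; set d := g m
    linear_combination (c * d) * this
  · intro f g h
    rw [torusGamma_mul_expand, torusGamma_mul_expand, torusGamma_mul_expand,
      finsupp_sum_rot f g h fun n v m d k e => d * e * v * torusT e₁ e₂ m k n,
      finsupp_sum_rot g h f fun n v m d k e => d * e * v * torusT e₁ e₂ m k n,
      finsupp_sum_rot f g h fun n v m d k e => e * v * d * torusT e₁ e₂ k n m,
      ← Finsupp.sum_add, ← Finsupp.sum_add]
    refine Eq.trans (Finsupp.sum_congr fun n _ => ?_) (Finsupp.sum_fun_zero _)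
    rw [← Finsupp.sum_add, ← Finsupp.sum_add]
    refine Eq.trans (Finsupp.sum_congr fun m _ => ?_) (Finsupp.sum_fun_zero _)
    rw [← Finsupp.sum_add, ← Finsupp.sum_add]
    refine Eq.trans (Finsupp.sum_congr fun k _ => ?_) (Finsupp.sum_fun_zero _)
    linear_combination (f n * g m * h k) * torusT_cyc e₁ e₂ n m k
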